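/- Fix reals ω₀ > 0, γ > 0, θ > 0 and an integer ℓ. For each integer n ≥ 1 let G^n_{ω₀,θ,ℓ}(x, y) = Σ_{j=0}^n ψ_j(x) ψ_j(y)/(λ_j + ω₀² − (2πℓ/θ)² + i·4γπℓ/θ), where ψ_j(x) = ((2 − δ_{0,j})/(n+1))^{1/2} cos(π j (2x+1)/(2(n+1))) and λ_j = 4 sin²(π j/(2(n+1))). Then lim_{n→∞} G^n_{ω₀,θ,ℓ}(0, n) = 0. -/

import Mathlib

open Real Filter

noncomputable section

/-- The Neumann eigenvectors `ψ_j(x) = ((2 − δ_{0,j})/(n+1))^{1/2} cos(πj(2x+1)/(2(n+1)))`. -/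
def psiN (n j x : ℕ) : ℝ :=
  Real.sqrt ((2 - if j = 0 then 1 else 0) / (n + 1)) *
    Real.cos (π * j * (2 * x + 1) / (2 * (n + 1)))

/-- The Green's function `G^n_{ω₀,θ,ℓ}(x,y)` of the complex operator
`[ω₀² − (2πℓ/θ)² + i·4γπℓ/θ] − Δ_N` on `{0,…,n}`, in its eigenfunction representation. -/
def greenNC (n : ℕ) (ω₀ γ θ : ℝ) (l : ℤ) (x y : ℕ) : ℂ :=
  ∑ j ∈ Finset.range (n + 1),
    ((psiN n j x * psiN n j y : ℝ) : ℂ) /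
      (((4 * Real.sin (π * j / (2 * (n + 1))) ^ 2 + ω₀ ^ 2 - (2 * π * l / θ) ^ 2 : ℝ) : ℂ)
        + Complex.I * ((4 * γ * π * l / θ : ℝ) : ℂ))

lemma myLipSin (s t : ℝ) : |Real.sin s - Real.sin t| ≤ |s - t| := by
  rw [Real.sin_sub_sin, abs_mul, abs_mul, abs_two]
  have h1 : |Real.sin ((s - t) / 2)| ≤ |s - t| / 2 := by
    have := Real.abs_sin_le_abs (x := (s - t) / 2)
    rwa [abs_div, abs_two] at this
  calc 2 * |Real.sin ((s - t) / 2)| * |Real.cos ((s + t) / 2)|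
      ≤ 2 * (|s - t| / 2) * 1 := by
        gcongr
        exact Real.abs_cos_le_one _
    _ = |s - t| := by ring

lemma myLipCos (s t : ℝ) : |Real.cos s - Real.cos t| ≤ |s - t| := by
  rw [Real.cos_sub_cos, abs_mul, abs_mul, abs_neg, abs_two]
  have h1 : |Real.sin ((s - t) / 2)| ≤ |s - t| / 2 := by
    have := Real.abs_sin_le_abs (x := (s - t) / 2)
    rwa [abs_div, abs_two] at this
  calc 2 * |Real.sin ((s + t) / 2)| * |Real.sin ((s - t) / 2)|
      ≤ 2 * 1 * (|s - t| / 2) := by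
        gcongr
        exact Real.abs_sin_le_one _
    _ = |s - t| := by ring

lemma myLipSinSq (s t : ℝ) : |Real.sin s ^ 2 - Real.sin t ^ 2| ≤ 2 * |s - t| := by
  have h : Real.sin s ^ 2 - Real.sin t ^ 2
      = (Real.sin s - Real.sin t) * (Real.sin s + Real.sin t) := by ring
  rw [h, abs_mul]
  have h2 : |Real.sin s + Real.sin t| ≤ 2 := by
    calc |Real.sin s + Real.sin t| ≤ |Real.sin s| + |Real.sin t| := abs_add_le _ _
      _ ≤ 1 + 1 := add_le_add (Real.abs_sin_le_one _) (Real.abs_sin_le_one _)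
      _ = 2 := by norm_num
  calc |Real.sin s - Real.sin t| * |Real.sin s + Real.sin t|
      ≤ |s - t| * 2 := mul_le_mul (myLipSin s t) h2 (abs_nonneg _) (abs_nonneg _)
    _ = 2 * |s - t| := by ring

lemma myLipCosSq (s t : ℝ) : |Real.cos s ^ 2 - Real.cos t ^ 2| ≤ 2 * |s - t| := by
  have h : Real.cos s ^ 2 - Real.cos t ^ 2
      = (Real.cos s - Real.cos t) * (Real.cos s + Real.cos t) := by ring
  rw [h, abs_mul]
  have h2 : |Real.cos s + Real.cos t| ≤ 2 := by
    calc |Real.cos s + Real.cos t| ≤ |Real.cos s| + |Real.cos t| := abs_add_le _ _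
      _ ≤ 1 + 1 := add_le_add (Real.abs_cos_le_one _) (Real.abs_cos_le_one _)
      _ = 2 := by norm_num
  calc |Real.cos s - Real.cos t| * |Real.cos s + Real.cos t|
      ≤ |s - t| * 2 := mul_le_mul (myLipCos s t) h2 (abs_nonneg _) (abs_nonneg _)
    _ = 2 * |s - t| := by ring

set_option maxHeartbeats 1600000 in
/-- The cross-boundary Green's function vanishes in the limit:
`lim_{n→∞} G^n_{ω₀,θ,ℓ}(0, n) = 0`. -/
theorem greenNC_cross_boundary_limit (ω₀ γ θ : ℝ) (hω : 0 < ω₀) (hγ : 0 < γ) (hθ : 0 < θ)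
    (l : ℤ) :
    Tendsto (fun n : ℕ => greenNC n ω₀ γ θ l 0 n) atTop (nhds 0) := by
  set a : ℝ := 2 * π * l / θ with ha
  set b : ℝ := 4 * γ * π * l / θ with hb
  set c : ℂ := ((ω₀ ^ 2 - a ^ 2 : ℝ) : ℂ) + Complex.I * (b : ℂ) with hc
  set δ : ℝ := if l = 0 then ω₀ ^ 2 else |b| with hδdef
  have hδ : 0 < δ := by
    rw [hδdef]
    split_ifs with hl
    · positivity
    · have hbne : b ≠ 0 := by
        rw [hb]
        have : (l : ℝ) ≠ 0 := Int.cast_ne_zero.mpr hl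
        positivity
      exact abs_pos.mpr hbne
  -- lower bound for the denominators
  have hden : ∀ t : ℝ, 0 ≤ t → δ ≤ ‖((t : ℂ) + c)‖ := by
    intro t ht
    rw [hδdef]
    split_ifs with hl
    · have ha0 : a = 0 := by rw [ha, hl]; simp
      have hre : ((t : ℂ) + c).re = t + (ω₀ ^ 2 - a ^ 2) := by
        simp [hc, ← Complex.ofReal_pow]
      calc ω₀ ^ 2 ≤ |((t : ℂ) + c).re| := by
            rw [hre, ha0]
            rw [abs_of_nonneg (by nlinarith)]
            nlinarith
        _ ≤ ‖(t : ℂ) + c‖ := by exact Complex.abs_re_le_norm _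
    · have him : ((t : ℂ) + c).im = b := by
        simp [hc, ← Complex.ofReal_pow]
      calc |b| = |((t : ℂ) + c).im| := by rw [him]
        _ ≤ ‖(t : ℂ) + c‖ := by exact Complex.abs_im_le_norm _
  set f : ℝ → ℂ := fun t => ((2 * Real.cos t ^ 2 : ℝ) : ℂ) /
      (((4 * Real.sin t ^ 2 : ℝ) : ℂ) + c) with hf
  have hsinsq : ∀ t : ℝ, (0 : ℝ) ≤ 4 * Real.sin t ^ 2 := by intro t; positivity
  have hDnorm : ∀ t : ℝ, δ ≤ ‖(((4 * Real.sin t ^ 2 : ℝ) : ℂ) + c)‖ :=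
    fun t => hden _ (hsinsq t)
  have hDne : ∀ t : ℝ, (((4 * Real.sin t ^ 2 : ℝ) : ℂ) + c) ≠ 0 := by
    intro t h
    have := hDnorm t
    rw [h, norm_zero] at this
    linarith
  have hNnorm : ∀ t : ℝ, ‖((2 * Real.cos t ^ 2 : ℝ) : ℂ)‖ ≤ 2 := by
    intro t
    rw [Complex.norm_real, Real.norm_eq_abs, abs_of_nonneg (by positivity)]
    nlinarith [Real.neg_one_le_cos t, Real.cos_le_one t]
  have hfb : ∀ t : ℝ, ‖f t‖ ≤ 2 / δ := by
    intro t
    rw [hf]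
    simp only [norm_div]
    exact div_le_div₀ (by norm_num) (hNnorm t) hδ (hDnorm t)
  set L : ℝ := (32 + 4 * ‖c‖) / δ ^ 2 with hL
  have hLpos : 0 ≤ L := by
    rw [hL]; positivity
  have hlip : ∀ s t : ℝ, ‖f s - f t‖ ≤ L * |s - t| := by
    intro s t
    set Ns := ((2 * Real.cos s ^ 2 : ℝ) : ℂ) with hNs
    set Nt := ((2 * Real.cos t ^ 2 : ℝ) : ℂ) with hNt
    set Ds := (((4 * Real.sin s ^ 2 : ℝ) : ℂ) + c) with hDs
    set Dt := (((4 * Real.sin t ^ 2 : ℝ) : ℂ) + c) with hDt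
    have hfs : f s - f t = (Ns * (Dt - Ds) + Ds * (Ns - Nt)) / (Ds * Dt) := by
      calc f s - f t = Ns / Ds - Nt / Dt := rfl
        _ = (Ns * Dt - Ds * Nt) / (Ds * Dt) := div_sub_div _ _ (hDne s) (hDne t)
        _ = (Ns * (Dt - Ds) + Ds * (Ns - Nt)) / (Ds * Dt) := by ring_nf
    rw [hfs, norm_div]
    have h1 : ‖Dt - Ds‖ ≤ 8 * |s - t| := by
      have heq : Dt - Ds = ((4 * Real.sin t ^ 2 - 4 * Real.sin s ^ 2 : ℝ) : ℂ) := by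
        rw [hDs, hDt]; push_cast; ring
      rw [heq, Complex.norm_real, Real.norm_eq_abs]
      have h2 := myLipSinSq t s
      have h3 : |4 * Real.sin t ^ 2 - 4 * Real.sin s ^ 2|
          = 4 * |Real.sin t ^ 2 - Real.sin s ^ 2| := by
        rw [show 4 * Real.sin t ^ 2 - 4 * Real.sin s ^ 2
            = 4 * (Real.sin t ^ 2 - Real.sin s ^ 2) from by ring, abs_mul]
        norm_num
      rw [h3, abs_sub_comm t s] at *
      linarith
    have h2 : ‖Ns - Nt‖ ≤ 4 * |s - t| := by
      have heq : Ns - Nt = ((2 * Real.cos s ^ 2 - 2 * Real.cos t ^ 2 : ℝ) : ℂ) := by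
        rw [hNs, hNt]; push_cast; ring
      rw [heq, Complex.norm_real, Real.norm_eq_abs]
      have h2 := myLipCosSq s t
      have h3 : |2 * Real.cos s ^ 2 - 2 * Real.cos t ^ 2|
          = 2 * |Real.cos s ^ 2 - Real.cos t ^ 2| := by
        rw [show 2 * Real.cos s ^ 2 - 2 * Real.cos t ^ 2
            = 2 * (Real.cos s ^ 2 - Real.cos t ^ 2) from by ring, abs_mul]
        norm_num
      rw [h3]
      linarith
    have h3 : ‖Ds‖ ≤ 4 + ‖c‖ := by
      calc ‖Ds‖ ≤ ‖((4 * Real.sin s ^ 2 : ℝ) : ℂ)‖ + ‖c‖ := norm_add_le _ _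
        _ ≤ 4 + ‖c‖ := by
            gcongr
            rw [Complex.norm_real, Real.norm_eq_abs, abs_of_nonneg (hsinsq s)]
            nlinarith [Real.neg_one_le_sin s, Real.sin_le_one s]
    have hnum : ‖Ns * (Dt - Ds) + Ds * (Ns - Nt)‖ ≤ (32 + 4 * ‖c‖) * |s - t| := by
      calc ‖Ns * (Dt - Ds) + Ds * (Ns - Nt)‖
          ≤ ‖Ns‖ * ‖Dt - Ds‖ + ‖Ds‖ * ‖Ns - Nt‖ := by
            refine le_trans (norm_add_le _ _) ?_
            rw [norm_mul, norm_mul]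
        _ ≤ 2 * (8 * |s - t|) + (4 + ‖c‖) * (4 * |s - t|) :=
            add_le_add
              (mul_le_mul (hNnorm s) h1 (norm_nonneg _) (by norm_num))
              (mul_le_mul h3 h2 (norm_nonneg _) (by positivity))
        _ = (32 + 4 * ‖c‖) * |s - t| := by ring
    have hden2 : δ ^ 2 ≤ ‖Ds * Dt‖ := by
      rw [norm_mul, sq]
      exact mul_le_mul (hDnorm s) (hDnorm t) (le_of_lt hδ) (norm_nonneg _)
    calc ‖Ns * (Dt - Ds) + Ds * (Ns - Nt)‖ / ‖Ds * Dt‖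
        ≤ ((32 + 4 * ‖c‖) * |s - t|) / δ ^ 2 :=
          div_le_div₀ (by positivity) hnum (by positivity) hden2
      _ = L * |s - t| := by rw [hL]; ring
  have hcne : c ≠ 0 := by
    have h := hDne 0
    simpa using h
  -- per-term identity for the eigenvector products
  have hpsi : ∀ (n j : ℕ), psiN n j 0 * psiN n j n
      = (-1:ℝ)^j * ((2 - if j = 0 then 1 else 0)
          * Real.cos (π * j / (2 * ((n:ℝ) + 1))) ^ 2 / ((n:ℝ) + 1)) := by
    intro n j
    have hn1 : (0:ℝ) < (n:ℝ) + 1 := by positivity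
    have hw : (0:ℝ) ≤ (2 - if j = 0 then 1 else 0) / ((n:ℝ) + 1) := by
      apply div_nonneg _ hn1.le
      split_ifs <;> norm_num
    unfold psiN
    have e0 : π * (j:ℝ) * (2 * ((0:ℕ):ℝ) + 1) / (2 * ((n:ℝ) + 1))
        = π * j / (2 * ((n:ℝ) + 1)) := by norm_num
    have en : π * (j:ℝ) * (2 * ((n:ℕ):ℝ) + 1) / (2 * ((n:ℝ) + 1))
        = (j:ℝ) * π - π * j / (2 * ((n:ℝ) + 1)) := by
      field_simp
      ring
    rw [e0, en, Real.cos_nat_mul_pi_sub]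
    set w : ℝ := (2 - if j = 0 then (1:ℝ) else 0) / ((n:ℝ) + 1) with hwdef
    set co : ℝ := Real.cos (π * j / (2 * ((n:ℝ) + 1)))
    calc Real.sqrt w * co * (Real.sqrt w * ((-1:ℝ)^j * co))
        = Real.sqrt w * Real.sqrt w * ((-1:ℝ)^j * co ^ 2) := by ring
      _ = w * ((-1:ℝ)^j * co ^ 2) := by rw [Real.mul_self_sqrt hw]
      _ = (-1:ℝ)^j * ((2 - if j = 0 then 1 else 0) * co ^ 2 / ((n:ℝ) + 1)) := by
          rw [hwdef]; ring
  -- key rewriting of the Green's function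
  have key : ∀ n : ℕ, greenNC n ω₀ γ θ l 0 n
      = (∑ j ∈ Finset.range (n+1), (-1:ℂ)^j * f (π * j / (2 * ((n:ℝ) + 1)))) / ((n:ℂ) + 1)
        - f 0 / (2 * ((n:ℂ) + 1)) := by
    intro n
    have hn1 : ((n:ℂ) + 1) ≠ 0 := Nat.cast_add_one_ne_zero n
    have hn1R : (0:ℝ) < (n:ℝ) + 1 := by positivity
    unfold greenNC
    have hterm : ∀ j ∈ Finset.range (n+1),
        ((psiN n j 0 * psiN n j n : ℝ) : ℂ) /
          (((4 * Real.sin (π * j / (2 * ((n:ℝ) + 1))) ^ 2 + ω₀ ^ 2 - (2 * π * l / θ) ^ 2 : ℝ) : ℂ)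
            + Complex.I * ((4 * γ * π * l / θ : ℝ) : ℂ))
        = (-1:ℂ)^j * f (π * j / (2 * ((n:ℝ) + 1))) / ((n:ℂ) + 1)
          - (if j = 0 then f 0 / (2 * ((n:ℂ) + 1)) else 0) := by
      intro j _
      have hD : (((4 * Real.sin (π * j / (2 * ((n:ℝ) + 1))) ^ 2 + ω₀ ^ 2
            - (2 * π * l / θ) ^ 2 : ℝ) : ℂ) + Complex.I * ((4 * γ * π * l / θ : ℝ) : ℂ))
          = ((4 * Real.sin (π * j / (2 * ((n:ℝ) + 1))) ^ 2 : ℝ) : ℂ) + c := by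
        rw [hc, ha, hb]
        push_cast
        ring
      rw [hpsi n j, hD]
      by_cases hj0 : j = 0
      · subst hj0
        have harg : π * ((0:ℕ):ℝ) / (2 * ((n:ℝ) + 1)) = 0 := by norm_num
        rw [harg]
        simp only [if_pos rfl, hf, Real.cos_zero, Real.sin_zero, pow_zero, one_mul]
        push_cast
        field_simp
      · simp only [if_neg hj0, sub_zero]
        have hD' := hDne (π * j / (2 * ((n:ℝ) + 1)))
        simp only [hf]
        push_cast at hD' ⊢
        field_simp
        try ring
        try exact Or.inl trivial
    rw [Finset.sum_congr rfl hterm, Finset.sum_sub_distrib, Finset.sum_div,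
      Finset.sum_ite_eq' (Finset.range (n+1)) 0 (fun _ => f 0 / (2 * ((n:ℂ) + 1)))]
    simp
  -- partial sums of (-1)^j are bounded by 1
  have hG : ∀ m : ℕ, ‖∑ i ∈ Finset.range m, (-1:ℂ)^i‖ ≤ 1 := by
    intro m
    rw [neg_one_geom_sum]
    split_ifs <;> simp
  -- Abel-summation bound for the alternating sums
  have hSbound : ∀ n : ℕ,
      ‖∑ j ∈ Finset.range (n+1), (-1:ℂ)^j * f (π * j / (2 * ((n:ℝ) + 1)))‖
        ≤ 2 / δ + L * (π / 2) := by
    intro n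
    have hn1R : (0:ℝ) < (n:ℝ) + 1 := by positivity
    set A : ℕ → ℂ := fun i => f (π * i / (2 * ((n:ℝ) + 1))) with hA
    have habel := Finset.sum_range_by_parts A (fun i => (-1:ℂ)^i) (n+1)
    simp only [smul_eq_mul, Nat.add_sub_cancel] at habel
    have hsum_eq : ∑ j ∈ Finset.range (n+1), (-1:ℂ)^j * f (π * j / (2 * ((n:ℝ) + 1)))
        = ∑ i ∈ Finset.range (n+1), A i * (-1:ℂ)^i := by
      apply Finset.sum_congr rfl
      intro i _
      rw [hA, mul_comm]
    rw [hsum_eq, habel]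
    have hvar : ∀ i ∈ Finset.range n, ‖(A (i+1) - A i) * ∑ j ∈ Finset.range (i+1), (-1:ℂ)^j‖
        ≤ L * (π / (2 * ((n:ℝ) + 1))) := by
      intro i _
      rw [norm_mul]
      have h1 : ‖A (i+1) - A i‖ ≤ L * (π / (2 * ((n:ℝ) + 1))) := by
        rw [hA]
        have h2 := hlip (π * ((i:ℕ)+1 : ℕ) / (2 * ((n:ℝ) + 1))) (π * i / (2 * ((n:ℝ) + 1)))
        have h3 : |π * (((i:ℕ)+1 : ℕ) : ℝ) / (2 * ((n:ℝ) + 1)) - π * i / (2 * ((n:ℝ) + 1))|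
            = π / (2 * ((n:ℝ) + 1)) := by
          have h4 : π * (((i:ℕ)+1 : ℕ) : ℝ) / (2 * ((n:ℝ) + 1)) - π * i / (2 * ((n:ℝ) + 1))
              = π / (2 * ((n:ℝ) + 1)) := by
            push_cast
            field_simp
            ring
          rw [h4, abs_of_nonneg (by positivity)]
        rw [h3] at h2
        exact h2
      calc ‖A (i+1) - A i‖ * ‖∑ j ∈ Finset.range (i+1), (-1:ℂ)^j‖
          ≤ (L * (π / (2 * ((n:ℝ) + 1)))) * 1 :=
            mul_le_mul h1 (hG (i+1)) (norm_nonneg _) (by positivity)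
        _ = L * (π / (2 * ((n:ℝ) + 1))) := by ring
    calc ‖A n * ∑ i ∈ Finset.range (n+1), (-1:ℂ)^i
          - ∑ i ∈ Finset.range n, (A (i+1) - A i) * ∑ j ∈ Finset.range (i+1), (-1:ℂ)^j‖
        ≤ ‖A n * ∑ i ∈ Finset.range (n+1), (-1:ℂ)^i‖
          + ‖∑ i ∈ Finset.range n, (A (i+1) - A i) * ∑ j ∈ Finset.range (i+1), (-1:ℂ)^j‖ :=
          norm_sub_le _ _
      _ ≤ 2 / δ * 1 + (n:ℝ) * (L * (π / (2 * ((n:ℝ) + 1)))) := by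
          gcongr ?_ + ?_
          · rw [norm_mul]
            exact mul_le_mul (hfb _) (hG (n+1)) (norm_nonneg _) (by positivity)
          · calc ‖∑ i ∈ Finset.range n, (A (i+1) - A i) * ∑ j ∈ Finset.range (i+1), (-1:ℂ)^j‖
                ≤ ∑ i ∈ Finset.range n, ‖(A (i+1) - A i) * ∑ j ∈ Finset.range (i+1), (-1:ℂ)^j‖ :=
                  norm_sum_le _ _
              _ ≤ ∑ _i ∈ Finset.range n, L * (π / (2 * ((n:ℝ) + 1))) :=
                  Finset.sum_le_sum hvar
              _ = (n:ℝ) * (L * (π / (2 * ((n:ℝ) + 1)))) := by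
                  rw [Finset.sum_const, Finset.card_range, nsmul_eq_mul]
      _ ≤ 2 / δ + L * (π / 2) := by
          have hfrac : (n:ℝ) * (L * (π / (2 * ((n:ℝ) + 1)))) ≤ L * (π / 2) := by
            have h5 : (n:ℝ) * (L * (π / (2 * ((n:ℝ) + 1))))
                = L * (π / 2) * ((n:ℝ) / ((n:ℝ) + 1)) := by
              have hgen : ∀ x : ℝ, (n:ℝ) * (x * (π / (2 * ((n:ℝ) + 1))))
                  = x * (π / 2) * ((n:ℝ) / ((n:ℝ) + 1)) := by
                intro x
                field_simp
              exact hgen L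
            have h6 : (n:ℝ) / ((n:ℝ) + 1) ≤ 1 := by
              rw [div_le_one hn1R]; linarith
            rw [h5]
            calc L * (π / 2) * ((n:ℝ) / ((n:ℝ) + 1)) ≤ L * (π / 2) * 1 := by
                  have : (0:ℝ) ≤ L * (π / 2) := by positivity
                  exact mul_le_mul_of_nonneg_left h6 this
              _ = L * (π / 2) := by ring
          linarith
  -- conclusion by squeezing
  set C : ℝ := 2 / δ + L * (π / 2) + 1 / δ with hC
  apply squeeze_zero_norm (a := fun n : ℕ => C / ((n:ℝ) + 1))
  · intro n
    have hn1R : (0:ℝ) < (n:ℝ) + 1 := by positivity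
    have hnorm1 : ‖((n:ℂ) + 1)‖ = (n:ℝ) + 1 := by
      have h : ((n:ℂ) + 1) = (((n:ℝ) + 1 : ℝ) : ℂ) := by push_cast; ring
      rw [h, Complex.norm_real, Real.norm_eq_abs, abs_of_nonneg hn1R.le]
    have hnorm2 : ‖(2 * ((n:ℂ) + 1))‖ = 2 * ((n:ℝ) + 1) := by
      have h : (2 * ((n:ℂ) + 1)) = ((2 * ((n:ℝ) + 1) : ℝ) : ℂ) := by push_cast; ring
      rw [h, Complex.norm_real, Real.norm_eq_abs, abs_of_nonneg (by positivity)]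
    rw [key n]
    calc ‖(∑ j ∈ Finset.range (n+1), (-1:ℂ)^j * f (π * j / (2 * ((n:ℝ) + 1)))) / ((n:ℂ) + 1)
          - f 0 / (2 * ((n:ℂ) + 1))‖
        ≤ ‖(∑ j ∈ Finset.range (n+1), (-1:ℂ)^j * f (π * j / (2 * ((n:ℝ) + 1)))) / ((n:ℂ) + 1)‖
          + ‖f 0 / (2 * ((n:ℂ) + 1))‖ := norm_sub_le _ _
      _ = ‖∑ j ∈ Finset.range (n+1), (-1:ℂ)^j * f (π * j / (2 * ((n:ℝ) + 1)))‖ / ((n:ℝ) + 1)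
          + ‖f 0‖ / (2 * ((n:ℝ) + 1)) := by
          rw [norm_div, norm_div, hnorm1, hnorm2]
      _ ≤ (2 / δ + L * (π / 2)) / ((n:ℝ) + 1) + (2 / δ) / (2 * ((n:ℝ) + 1)) := by
          gcongr
          · exact hSbound n
          · exact hfb 0
      _ = C / ((n:ℝ) + 1) := by
          rw [hC]
          field_simp
  · exact Tendsto.div_atTop tendsto_const_nhds
      (tendsto_atTop_add_const_right atTop 1 tendsto_natCast_atTop_atTop)

end
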